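/- In a semigroup in which every element has at least one inverse element (i.e., for every x there exists y with xyx = x and yxy = y), inverses are unique if and only if all idempotents commute. -/
import Mathlib


/-- Vagner's theorem: in a semigroup in which every element has at least one
inverse element, inverses are unique iff all idempotents commute. -/
theorem stmt0 {S : Type*} [Semigroup S]
    (hreg : ∀ x : S, ∃ y : S, x * y * x = x ∧ y * x * y = y) :
    (∀ x y z : S, (x * y * x = x ∧ y * x * y = y) →
        (x * z * x = x ∧ z * x * z = z) → y = z)
      ↔ (∀ e f : S, e * e = e → f * f = f → e * f = f * e) := by
  constructor
  · intro huniq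
    -- First: for any idempotents e, f, the product e*f is idempotent.
    have hprod : ∀ e f : S, e * e = e → f * f = f → (e * f) * (e * f) = e * f := by
      intro e f he hf
      have he2 : ∀ x : S, e * (e * x) = e * x := fun x => by rw [← mul_assoc, he]
      have hf2 : ∀ x : S, f * (f * x) = f * x := fun x => by rw [← mul_assoc, hf]
      obtain ⟨y, h1, h2⟩ := hreg (e * f)
      have hg1 : (e * f) * (f * y * e) * (e * f) = e * f := by
        have := congrArg (fun t => t * f) (congrArg (fun t => e * t) h1)
        simpa [mul_assoc, he, hf, he2, hf2] using this
      have hg2 : (f * y * e) * (e * f) * (f * y * e) = f * y * e := by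
        have := congrArg (fun t => t * e) (congrArg (fun t => f * t) h2)
        simpa [mul_assoc, he, hf, he2, hf2] using this
      have hgg : (f * y * e) * (f * y * e) = f * y * e := by
        have := congrArg (fun t => t * e) (congrArg (fun t => f * t) h2)
        simpa [mul_assoc, he, hf, he2, hf2] using this
      -- e*f and f*y*e are both inverses of f*y*e, hence equal
      have hggg : (f * y * e) * (f * y * e) * (f * y * e) = f * y * e := by
        rw [hgg, hgg]
      have heq : f * y * e = e * f :=
        huniq (f * y * e) (f * y * e) (e * f) ⟨hggg, hggg⟩ ⟨hg2, hg1⟩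
      rw [← heq, hgg]
    intro e f he hf
    have hef := hprod e f he hf
    have hfe := hprod f e hf he
    -- f*e is an inverse of e*f, and so is e*f itself
    have h1 : (e * f) * (f * e) * (e * f) = e * f := by
      have : (e * f) * (f * e) * (e * f) = (e * (f * f)) * (e * (e * f)) := by
        simp [mul_assoc]
      rw [this, hf, ← mul_assoc e e f, he, hef]
    have h2 : (f * e) * (e * f) * (f * e) = f * e := by
      have : (f * e) * (e * f) * (f * e) = (f * (e * e)) * (f * (f * e)) := by
        simp [mul_assoc]
      rw [this, he, ← mul_assoc f f e, hf, hfe]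
    have hefef : (e * f) * (e * f) * (e * f) = e * f := by rw [hef, hef]
    exact huniq (e * f) (e * f) (f * e) ⟨hefef, hefef⟩ ⟨h1, h2⟩
  · intro hcomm x y z ⟨hy1, hy2⟩ ⟨hz1, hz2⟩
    have hxy : (x * y) * (x * y) = x * y := by rw [← mul_assoc, hy1]
    have hxz : (x * z) * (x * z) = x * z := by rw [← mul_assoc, hz1]
    have hyx : (y * x) * (y * x) = y * x := by rw [← mul_assoc, hy2]
    have hzx : (z * x) * (z * x) = z * x := by rw [← mul_assoc, hz2]
    have c1 := hcomm (x * z) (x * y) hxz hxy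
    have c2 := hcomm (y * x) (z * x) hyx hzx
    have key1 : y = y * x * z := by
      calc y = y * x * y := hy2.symm
        _ = y * (x * z * x) * y := by rw [hz1]
        _ = y * ((x * z) * (x * y)) := by simp [mul_assoc]
        _ = y * ((x * y) * (x * z)) := by rw [c1]
        _ = (y * x * y) * (x * z) := by simp [mul_assoc]
        _ = y * (x * z) := by rw [hy2]
        _ = y * x * z := by rw [mul_assoc]
    have key2 : z = y * x * z := by
      calc z = z * x * z := hz2.symm
        _ = z * (x * y * x) * z := by rw [hy1]
        _ = (z * x) * (y * x) * z := by simp [mul_assoc]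
        _ = (y * x) * (z * x) * z := by rw [← c2]
        _ = y * x * (z * x * z) := by simp [mul_assoc]
        _ = y * x * z := by rw [hz2]
    exact key1.trans key2.symm
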